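/- arXiv:1703.09732 — 2 statements merged into one kernel-verified Lean document; each statement's English description precedes it below -/
import Mathlib

section
/- Let H1 be a d-regular graph on n1 vertices and H2 a graph on n2 vertices with maximum degree at most k. Let H be the join of H1 and H2 (every vertex of H1 adjacent to every vertex of H2). Then the largest eigenvalue of the adjacency matrix of H is at most the largest eigenvalue of the 2x2 matrix [[d, n2],[n1, k]]. -/
open SimpleGraph Finset

attribute [local instance] Classical.propDecidable

/-- The largest eigenvalue of a real matrix, as the supremum of its eigenvalues. -/
noncomputable def lam1 {V : Type*} [Fintype V] (A : Matrix V V ℝ) : ℝ :=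
  sSup {t : ℝ | ∃ x : V → ℝ, x ≠ 0 ∧ A.mulVec x = t • x}

/-- The join of two simple graphs: all edges of both graphs plus all edges between them. -/
def SimpleGraph.join {α β : Type*} (G : SimpleGraph α) (H : SimpleGraph β) :
    SimpleGraph (α ⊕ β) where
  Adj x y :=
    match x, y with
    | Sum.inl a, Sum.inl b => G.Adj a b
    | Sum.inr a, Sum.inr b => H.Adj a b
    | Sum.inl _, Sum.inr _ => True
    | Sum.inr _, Sum.inl _ => True
  symm := by constructor; rintro (a | a) (b | b) h
             · exact G.adj_symm h
             · trivial
             · trivial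
             · exact H.adj_symm h
  loopless := by constructor; rintro (a | a) h
                 · exact G.irrefl h
                 · exact H.irrefl h

lemma join_adj_ll {α β : Type*} (G : SimpleGraph α) (H : SimpleGraph β) (a b : α) :
    (G.join H).Adj (Sum.inl a) (Sum.inl b) ↔ G.Adj a b := Iff.rfl

lemma join_adj_lr {α β : Type*} (G : SimpleGraph α) (H : SimpleGraph β) (a : α) (b : β) :
    (G.join H).Adj (Sum.inl a) (Sum.inr b) ↔ True := Iff.rfl

lemma join_adj_rl {α β : Type*} (G : SimpleGraph α) (H : SimpleGraph β) (a : β) (b : α) :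
    (G.join H).Adj (Sum.inr a) (Sum.inl b) ↔ True := Iff.rfl

lemma join_adj_rr {α β : Type*} (G : SimpleGraph α) (H : SimpleGraph β) (a b : β) :
    (G.join H).Adj (Sum.inr a) (Sum.inr b) ↔ H.Adj a b := Iff.rfl

lemma sum_ite_adj {V : Type*} [Fintype V] (G : SimpleGraph V) [DecidableRel G.Adj]
    (a : V) (c : ℝ) :
    ∑ b, (if G.Adj a b then c else 0) = (G.degree a) * c := by
  rw [Finset.sum_ite, Finset.sum_const_zero, add_zero, Finset.sum_const, nsmul_eq_mul]
  congr 2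
  simp [SimpleGraph.degree, SimpleGraph.neighborFinset_eq_filter]

lemma quad_bound {V : Type*} [Fintype V] (G : SimpleGraph V) [DecidableRel G.Adj] (k : ℕ)
    (hdeg : ∀ v, G.degree v ≤ k) (x : V → ℝ) :
    ∑ a, ∑ b, (if G.Adj a b then x a * x b else 0) ≤ k * ∑ a, (x a)^2 := by
  have h1 : ∑ a, ∑ b, (if G.Adj a b then x a * x b else 0)
      ≤ ∑ a, ∑ b, (if G.Adj a b then ((x a)^2 + (x b)^2)/2 else 0) := by
    refine Finset.sum_le_sum fun a _ => Finset.sum_le_sum fun b _ => ?_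
    split
    · nlinarith [sq_nonneg (x a - x b)]
    · exact le_refl _
  have hsplit : ∀ a b : V, (if G.Adj a b then ((x a)^2 + (x b)^2)/2 else 0)
      = (if G.Adj a b then (x a)^2/2 else 0) + (if G.Adj a b then (x b)^2/2 else 0) := by
    intro a b; split <;> ring
  have hswap : ∑ a, ∑ b, (if G.Adj a b then (x b)^2/2 else 0)
      = ∑ a, ∑ b, (if G.Adj a b then (x a)^2/2 else 0) := by
    rw [Finset.sum_comm]
    refine Finset.sum_congr rfl fun a _ => Finset.sum_congr rfl fun b _ => ?_
    simp [G.adj_comm]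
  have h2 : ∑ a, ∑ b, (if G.Adj a b then ((x a)^2 + (x b)^2)/2 else 0)
      = ∑ a, ∑ b, (if G.Adj a b then (x a)^2 else 0) := by
    simp_rw [hsplit, Finset.sum_add_distrib]
    rw [hswap]
    rw [← Finset.sum_add_distrib]
    refine Finset.sum_congr rfl fun a _ => ?_
    rw [← Finset.sum_add_distrib]
    refine Finset.sum_congr rfl fun b _ => ?_
    split <;> ring
  have h3 : ∑ a, ∑ b, (if G.Adj a b then (x a)^2 else 0) ≤ k * ∑ a, (x a)^2 := by
    rw [Finset.mul_sum]
    refine Finset.sum_le_sum fun a _ => ?_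
    rw [sum_ite_adj]
    have : (G.degree a : ℝ) ≤ (k : ℝ) := by exact_mod_cast hdeg a
    nlinarith [sq_nonneg (x a)]
  linarith

set_option maxHeartbeats 1000000 in
theorem stmt0 {V₁ V₂ : Type*} [Fintype V₁] [Fintype V₂]
    (H₁ : SimpleGraph V₁) (H₂ : SimpleGraph V₂) (d k n₁ n₂ : ℕ)
    (hn₁ : Fintype.card V₁ = n₁) (hn₂ : Fintype.card V₂ = n₂)
    (hreg : H₁.IsRegularOfDegree d) (hdeg : ∀ v, H₂.degree v ≤ k) :
    lam1 ((H₁.join H₂).adjMatrix ℝ) ≤ lam1 !![(d : ℝ), (n₂ : ℝ); (n₁ : ℝ), (k : ℝ)] := by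
  have hd0 : (0:ℝ) ≤ ((d:ℝ)-k)^2 + 4*n₁*n₂ := by positivity
  set s : ℝ := Real.sqrt (((d:ℝ)-k)^2 + 4*n₁*n₂) with hsdef
  have hs : s^2 = ((d:ℝ)-k)^2 + 4*n₁*n₂ := Real.sq_sqrt hd0
  have hs0 : 0 ≤ s := Real.sqrt_nonneg _
  set μ : ℝ := ((d:ℝ)+k+s)/2 with hμdef
  have h2μeq : 2*μ - (d:ℝ) - (k:ℝ) = s := by rw [hμdef]; ring
  have hquad : μ^2 - ((d:ℝ)+k)*μ + ((d:ℝ)*k - n₁*n₂) = 0 := by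
    linear_combination hs/4 + (2*μ - (d:ℝ) - (k:ℝ) + s)/4 * h2μeq
  have h2μ : (d:ℝ) + k ≤ 2*μ := by rw [hμdef]; linarith
  have hn₁0 : (0:ℝ) ≤ n₁ := Nat.cast_nonneg _
  have hn₂0 : (0:ℝ) ≤ n₂ := Nat.cast_nonneg _
  have hprod : (μ - d)*(μ - k) = (n₁:ℝ)*n₂ := by linear_combination hquad
  have hμd : (d:ℝ) ≤ μ := by nlinarith [mul_nonneg hn₁0 hn₂0]
  have hμk : (k:ℝ) ≤ μ := by nlinarith [mul_nonneg hn₁0 hn₂0]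
  have hμ0 : 0 ≤ μ := le_trans (Nat.cast_nonneg _) hμd
  set B : Matrix (Fin 2) (Fin 2) ℝ := !![(d : ℝ), (n₂ : ℝ); (n₁ : ℝ), (k : ℝ)] with hBdef
  -- every eigenvalue of B is ≤ μ, and μ is an eigenvalue of B
  have hBchar : ∀ t : ℝ, (∃ v : Fin 2 → ℝ, v ≠ 0 ∧ B.mulVec v = t • v) →
      t^2 - ((d:ℝ)+k)*t + ((d:ℝ)*k - n₁*n₂) = 0 := by
    intro t ⟨v, hv0, hv⟩
    have hker : (B - t • 1).mulVec v = 0 := by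
      rw [Matrix.sub_mulVec, Matrix.smul_mulVec, Matrix.one_mulVec, hv, sub_self]
    have hdet : (B - t • 1).det = 0 :=
      Matrix.exists_mulVec_eq_zero_iff.mp ⟨v, hv0, hker⟩
    rw [hBdef] at hdet
    simp [Matrix.det_fin_two, Matrix.sub_apply, Matrix.smul_apply, Matrix.one_apply] at hdet
    linear_combination hdet
  have hBle : ∀ t ∈ {t : ℝ | ∃ x : Fin 2 → ℝ, x ≠ 0 ∧ B.mulVec x = t • x}, t ≤ μ := by
    intro t ht
    have h := hBchar t ht
    have hfac : (t - μ)*(t + μ - ((d:ℝ)+k)) = 0 := by linear_combination h - hquad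
    rcases mul_eq_zero.mp hfac with h1 | h1
    · linarith [sub_eq_zero.mp h1]
    · linarith
  have hμmem : μ ∈ {t : ℝ | ∃ x : Fin 2 → ℝ, x ≠ 0 ∧ B.mulVec x = t • x} := by
    have hdet : (B - μ • 1).det = 0 := by
      rw [hBdef]
      simp [Matrix.det_fin_two, Matrix.sub_apply, Matrix.smul_apply, Matrix.one_apply]
      linear_combination hquad
    obtain ⟨v, hv0, hv⟩ := Matrix.exists_mulVec_eq_zero_iff.mpr hdet
    refine ⟨v, hv0, ?_⟩
    rw [Matrix.sub_mulVec, Matrix.smul_mulVec, Matrix.one_mulVec, sub_eq_zero] at hv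
    exact hv
  have hμle : μ ≤ lam1 B := le_csSup ⟨μ, hBle⟩ hμmem
  refine le_trans ?_ hμle
  -- now show every eigenvalue of the join is ≤ μ
  refine Real.sSup_le ?_ hμ0
  rintro t ⟨x, hx0, hx⟩
  set A := (H₁.join H₂).adjMatrix ℝ with hAdef
  set S₁ : ℝ := ∑ a, (x (Sum.inl a))^2 with hS₁def
  set S₂ : ℝ := ∑ c, (x (Sum.inr c))^2 with hS₂def
  set T₁ : ℝ := ∑ a, x (Sum.inl a) with hT₁def
  set T₂ : ℝ := ∑ c, x (Sum.inr c) with hT₂def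
  set Q₁ : ℝ := ∑ a, ∑ b, (if H₁.Adj a b then x (Sum.inl a) * x (Sum.inl b) else 0) with hQ₁def
  set Q₂ : ℝ := ∑ a, ∑ b, (if H₂.Adj a b then x (Sum.inr a) * x (Sum.inr b) else 0) with hQ₂def
  have hrow1 : ∀ a : V₁, (A.mulVec x) (Sum.inl a)
      = (∑ b, if H₁.Adj a b then x (Sum.inl b) else 0) + T₂ := by
    intro a
    rw [hAdef]
    simp [Matrix.mulVec, dotProduct, Fintype.sum_sum_type,
      join_adj_ll, join_adj_lr, ite_mul, one_mul, zero_mul, hT₂def]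
  have hrow2 : ∀ c : V₂, (A.mulVec x) (Sum.inr c)
      = T₁ + ∑ e, if H₂.Adj c e then x (Sum.inr e) else 0 := by
    intro c
    rw [hAdef]
    simp [Matrix.mulVec, dotProduct, Fintype.sum_sum_type,
      join_adj_rl, join_adj_rr, ite_mul, one_mul, zero_mul, hT₁def]
  have hkey : t * (S₁ + S₂) = Q₁ + T₁*T₂ + (T₂*T₁ + Q₂) := by
    have lhs : ∑ u, x u * (A.mulVec x) u = t * (S₁ + S₂) := by
      rw [hx]
      simp only [Pi.smul_apply, smul_eq_mul]
      calc ∑ u, x u * (t * x u) = ∑ u, t * (x u)^2 :=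
            Finset.sum_congr rfl fun u _ => by ring
        _ = t * ∑ u, (x u)^2 := by rw [← Finset.mul_sum]
        _ = t * (S₁ + S₂) := by rw [hS₁def, hS₂def, Fintype.sum_sum_type]
    rw [← lhs, Fintype.sum_sum_type]
    have p1 : ∑ a, x (Sum.inl a) * (A.mulVec x) (Sum.inl a) = Q₁ + T₁*T₂ := by
      simp_rw [hrow1, mul_add]
      rw [Finset.sum_add_distrib, ← Finset.sum_mul]
      congr 1
      refine Finset.sum_congr rfl fun a _ => ?_
      rw [Finset.mul_sum]
      exact Finset.sum_congr rfl fun b _ => by split <;> ring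
    have p2 : ∑ c, x (Sum.inr c) * (A.mulVec x) (Sum.inr c) = T₂*T₁ + Q₂ := by
      simp_rw [hrow2, mul_add]
      rw [Finset.sum_add_distrib, ← Finset.sum_mul]
      congr 1
      refine Finset.sum_congr rfl fun c _ => ?_
      rw [Finset.mul_sum]
      exact Finset.sum_congr rfl fun e _ => by split <;> ring
    rw [p1, p2]
  have hQ₁ : Q₁ ≤ d * S₁ := quad_bound H₁ d (fun v => (hreg v).le) _
  have hQ₂ : Q₂ ≤ k * S₂ := quad_bound H₂ k hdeg _
  have hT₁ : T₁^2 ≤ n₁ * S₁ := by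
    have h := Finset.sum_mul_sq_le_sq_mul_sq Finset.univ (fun _ => (1:ℝ))
      (fun a => x (Sum.inl a))
    simp only [one_mul, one_pow, Finset.sum_const, Finset.card_univ, nsmul_eq_mul,
      mul_one] at h
    rw [hT₁def, hS₁def, ← hn₁]
    exact h
  have hT₂ : T₂^2 ≤ n₂ * S₂ := by
    have h := Finset.sum_mul_sq_le_sq_mul_sq Finset.univ (fun _ => (1:ℝ))
      (fun c => x (Sum.inr c))
    simp only [one_mul, one_pow, Finset.sum_const, Finset.card_univ, nsmul_eq_mul,
      mul_one] at h
    rw [hT₂def, hS₂def, ← hn₂]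
    exact h
  have hS₁0 : 0 ≤ S₁ := Finset.sum_nonneg fun a _ => sq_nonneg _
  have hS₂0 : 0 ≤ S₂ := Finset.sum_nonneg fun c _ => sq_nonneg _
  have hpos : 0 < S₁ + S₂ := by
    obtain ⟨u, hu⟩ := Function.ne_iff.mp hx0
    have : 0 < ∑ u, (x u)^2 := by
      refine Finset.sum_pos' (fun v _ => sq_nonneg _) ⟨u, Finset.mem_univ _, ?_⟩
      exact lt_of_le_of_ne (sq_nonneg _) (Ne.symm (pow_ne_zero 2 hu))
    rw [Fintype.sum_sum_type] at this
    exact this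
  have hTT : T₁^2 * T₂^2 ≤ (n₁ * S₁) * (n₂ * S₂) :=
    mul_le_mul hT₁ hT₂ (sq_nonneg _) (mul_nonneg hn₁0 hS₁0)
  have h2T : 2*(T₁*T₂) ≤ (μ - d)*S₁ + (μ - k)*S₂ := by
    by_contra h
    push_neg at h
    have hP : 0 ≤ (μ - d)*S₁ + (μ - k)*S₂ := by
      have := mul_nonneg (by linarith : (0:ℝ) ≤ μ - d) hS₁0
      have := mul_nonneg (by linarith : (0:ℝ) ≤ μ - k) hS₂0
      linarith
    have hDS : (n₁:ℝ)*S₁*((n₂:ℝ)*S₂) = (μ - d)*S₁*((μ - k)*S₂) := by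
      linear_combination (S₁*S₂) * hprod.symm
    have hT4 : T₁^2*T₂^2 ≤ (μ - d)*S₁*((μ - k)*S₂) := hDS ▸ hTT
    nlinarith [hT4, sq_nonneg ((μ - d)*S₁ - (μ - k)*S₂), h, hP]
  have hfinal : t * (S₁ + S₂) ≤ μ * (S₁ + S₂) := by
    rw [hkey]; nlinarith
  exact le_of_mul_le_mul_right (by linarith) hpos
end

section
/- Let G be a connected finite simple graph, A its adjacency matrix, lambda its largest eigenvalue, and x a corresponding eigenvector with strictly positive entries normalized so that its maximum entry is 1 attained at a vertex z. Suppose H is obtained from G by deleting all edges incident to a vertex u (with u != z and u not adjacent to z) and adding the single edge uz. If the sum of x_v over neighbors v of u in G is strictly less than x_z = 1, then the largest eigenvalue of the adjacency matrix of H is strictly greater than lambda. -/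
open SimpleGraph Finset RealInnerProductSpace

attribute [local instance] Classical.propDecidable

lemma rayleigh_le_lam1 {V : Type*} [Fintype V] [DecidableEq V] [Nonempty V]
    (B : Matrix V V ℝ) (hB : B.IsHermitian) (y : V → ℝ) (hy : y ≠ 0) :
    ∑ i, y i * B.mulVec y i ≤ lam1 B * ∑ i, y i ^ 2 := by
  classical
  set T : EuclideanSpace ℝ V →ₗ[ℝ] EuclideanSpace ℝ V := Matrix.toEuclideanLin B with hT
  have hTsymm : T.IsSymmetric := Matrix.isHermitian_iff_isSymmetric.mp hB
  -- operator norm bound via CLM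
  set T' : EuclideanSpace ℝ V →L[ℝ] EuclideanSpace ℝ V := LinearMap.toContinuousLinearMap T
    with hT'
  have hTapp : ∀ w : EuclideanSpace ℝ V, T w = (WithLp.equiv 2 (V → ℝ)).symm
      (B.mulVec ((WithLp.equiv 2 (V → ℝ)) w)) := fun w => rfl
  -- the inner product formula
  have hinner : ∀ w : EuclideanSpace ℝ V, (⟪T w, w⟫) ≤ ‖T'‖ * ‖w‖ ^ 2 := by
    intro w
    calc (⟪T w, w⟫) ≤ ‖T w‖ * ‖w‖ := real_inner_le_norm _ _
    _ = ‖T' w‖ * ‖w‖ := rfl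
    _ ≤ (‖T'‖ * ‖w‖) * ‖w‖ := by
        gcongr; exact T'.le_opNorm w
    _ = ‖T'‖ * ‖w‖ ^ 2 := by ring
  -- eigenvalues are bounded above by ‖T'‖
  have hbdd : ∀ t ∈ {t : ℝ | ∃ x : V → ℝ, x ≠ 0 ∧ B.mulVec x = t • x}, t ≤ ‖T'‖ := by
    rintro t ⟨w, hw0, hw⟩
    set w' : EuclideanSpace ℝ V := (WithLp.equiv 2 (V → ℝ)).symm w with hw'
    have hw'0 : w' ≠ 0 := by
      simpa [hw', WithLp.equiv] using hw0
    have hTw : T w' = t • w' := by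
      rw [hTapp]
      simp only [hw', Equiv.apply_symm_apply, hw]
      rfl
    have h1 : (⟪T w', w'⟫) = t * ‖w'‖ ^ 2 := by
      rw [hTw, real_inner_smul_left, real_inner_self_eq_norm_sq]
    have h2 := hinner w'
    rw [h1] at h2
    have hn : (0:ℝ) < ‖w'‖ ^ 2 := pow_pos (norm_pos_iff.mpr hw'0) 2
    exact le_of_mul_le_mul_right (by linarith) hn
  have hbddS : BddAbove {t : ℝ | ∃ x : V → ℝ, x ≠ 0 ∧ B.mulVec x = t • x} := ⟨‖T'‖, hbdd⟩
  -- the sup of the Rayleigh quotient is an eigenvalue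
  set μ : ℝ := ⨆ w : { w : EuclideanSpace ℝ V // w ≠ 0 }, (⟪T w, w⟫) / ‖(w : EuclideanSpace ℝ V)‖ ^ 2 with hμ
  have heval : Module.End.HasEigenvalue T μ := by
    have := hTsymm.hasEigenvalue_iSup_of_finiteDimensional
    simpa using this
  obtain ⟨w, hwT', hw0⟩ := heval.exists_hasEigenvector
  have hwT : T w = μ • w := Module.End.mem_eigenspace_iff.mp hwT'
  have hμmem : μ ∈ {t : ℝ | ∃ x : V → ℝ, x ≠ 0 ∧ B.mulVec x = t • x} := by
    refine ⟨(WithLp.equiv 2 (V → ℝ)) w, ?_, ?_⟩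
    · simpa [WithLp.equiv] using hw0
    · have := hwT
      have h2 : T w = μ • w := hwT
      calc B.mulVec ((WithLp.equiv 2 (V → ℝ)) w)
          = (WithLp.equiv 2 (V → ℝ)) (T w) := rfl
        _ = μ • (WithLp.equiv 2 (V → ℝ)) w := by rw [h2]; rfl
  have hμle : μ ≤ lam1 B := le_csSup hbddS hμmem
  -- Rayleigh quotient of y is at most μ
  set y' : EuclideanSpace ℝ V := (WithLp.equiv 2 (V → ℝ)).symm y with hy'
  have hy'0 : y' ≠ 0 := by simpa [hy', WithLp.equiv] using hy
  have hray : (⟪T y', y'⟫) / ‖y'‖ ^ 2 ≤ μ := by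
    refine le_ciSup (f := fun w : { w : EuclideanSpace ℝ V // w ≠ 0 } =>
      (⟪T w, w⟫) / ‖(w : EuclideanSpace ℝ V)‖ ^ 2) ?_ ⟨y', hy'0⟩
    refine ⟨‖T'‖, ?_⟩
    rintro r ⟨⟨w, hw0⟩, rfl⟩
    have hn : (0:ℝ) < ‖w‖ ^ 2 := pow_pos (norm_pos_iff.mpr hw0) 2
    rw [div_le_iff₀ hn]
    exact hinner w
  have hnorm : ‖y'‖ ^ 2 = ∑ i, y i ^ 2 := by
    rw [EuclideanSpace.norm_eq, Real.sq_sqrt (by positivity)]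
    refine Finset.sum_congr rfl fun i _ => ?_
    simp [hy', Real.norm_eq_abs, sq_abs]
  have hinnery : (⟪T y', y'⟫) = ∑ i, y i * B.mulVec y i := by
    rw [hTapp]
    simp only [hy', Equiv.apply_symm_apply]
    rw [PiLp.inner_apply]
    refine Finset.sum_congr rfl fun i _ => ?_
    simp only [RCLike.inner_apply, starRingEnd_apply, star_trivial]
    show y i * B.mulVec y i = _
    ring
  have hnpos : (0:ℝ) < ‖y'‖ ^ 2 := pow_pos (norm_pos_iff.mpr hy'0) 2
  have hfin := (div_le_iff₀ hnpos).mp (le_trans hray hμle)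
  rw [hinnery, hnorm] at hfin
  exact hfin

theorem stmt5 {V : Type*} [Fintype V] (G H : SimpleGraph V) (hconn : G.Connected)
    (lam : ℝ) (x : V → ℝ) (hlam : lam = lam1 (G.adjMatrix ℝ))
    (heig : (G.adjMatrix ℝ).mulVec x = lam • x)
    (hpos : ∀ v, 0 < x v) (hle : ∀ v, x v ≤ 1) (z u : V) (hz : x z = 1)
    (huz : u ≠ z) (hnadj : ¬ G.Adj u z)
    (hH : ∀ a b, H.Adj a b ↔
      ((G.Adj a b ∧ a ≠ u ∧ b ≠ u) ∨ (a = u ∧ b = z) ∨ (a = z ∧ b = u)))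
    (hsum : ∑ v ∈ G.neighborFinset u, x v < 1) :
    lam < lam1 (H.adjMatrix ℝ) := by
  classical
  haveI : Nonempty V := ⟨z⟩
  set S : ℝ := ∑ v ∈ G.neighborFinset u, x v with hS
  set N : ℝ := ∑ i, x i ^ 2 with hNdef
  have hN : 0 < N :=
    Finset.sum_pos (fun i _ => by have := hpos i; positivity) ⟨z, Finset.mem_univ z⟩
  have hx0 : x ≠ 0 := by
    intro h
    have := hpos z
    rw [h] at this
    simp at this
  set e : V → ℝ := fun t => (if t = z then (1:ℝ) else 0) - (G.adjMatrix ℝ) u t with he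
  have hsymG : ∀ a b, (G.adjMatrix ℝ) a b = (G.adjMatrix ℝ) b a := by
    intro a b
    simp only [SimpleGraph.adjMatrix_apply]
    exact if_congr (G.adj_comm a b) rfl rfl
  have hkey : ∀ v w, (H.adjMatrix ℝ) v w =
      (G.adjMatrix ℝ) v w + (if v = u then e w else 0) + (if w = u then e v else 0) := by
    intro v w
    by_cases hv : v = u <;> by_cases hw : w = u
    · rw [hv, hw]
      have h0 : (H.adjMatrix ℝ) u u = 0 := by simp
      have h0' : (G.adjMatrix ℝ) u u = 0 := by simp
      rw [h0, if_pos rfl]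
      simp only [he]
      rw [if_neg huz, h0']
      ring
    · rw [hv]
      have h1 : (H.adjMatrix ℝ) u w = (if w = z then 1 else 0) := by
        have h1' : H.Adj u w ↔ w = z := by rw [hH]; simp [huz]
        simp [SimpleGraph.adjMatrix_apply, h1']
      rw [h1, if_pos rfl, if_neg hw, add_zero]
      simp only [he]
      ring
    · rw [hw]
      have h1 : (H.adjMatrix ℝ) v u = (if v = z then 1 else 0) := by
        have h1' : H.Adj v u ↔ v = z := by rw [hH]; simp [huz]
        simp [SimpleGraph.adjMatrix_apply, h1']
      rw [h1, if_neg hv, if_pos rfl]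
      simp only [he]
      rw [hsymG u v]
      ring
    · have h1 : (H.adjMatrix ℝ) v w = (G.adjMatrix ℝ) v w := by
        have h1' : H.Adj v w ↔ G.Adj v w := by rw [hH]; simp [hv, hw]
        simp [SimpleGraph.adjMatrix_apply, h1']
      rw [h1, if_neg hv, if_neg hw]
      ring
  have hes : ∑ t, e t * x t = 1 - S := by
    simp only [he, sub_mul, Finset.sum_sub_distrib, ite_mul, one_mul, zero_mul]
    rw [Finset.sum_ite_eq' Finset.univ z x]
    simp only [Finset.mem_univ, if_true, hz]
    congr 1
    have h2 := SimpleGraph.adjMatrix_mulVec_apply (α := ℝ) G u x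
    simp only [Matrix.mulVec, dotProduct] at h2
    rw [h2]
  have hQ : ∑ v, x v * ((H.adjMatrix ℝ).mulVec x) v
      = ∑ v, x v * ((G.adjMatrix ℝ).mulVec x) v + 2 * x u * (1 - S) := by
    simp only [Matrix.mulVec, dotProduct]
    have hrow : ∀ v, ∑ w, (H.adjMatrix ℝ) v w * x w =
        ∑ w, (G.adjMatrix ℝ) v w * x w + (if v = u then (1 - S) else 0) + e v * x u := by
      intro v
      have hterm : ∀ w, (H.adjMatrix ℝ) v w * x w = (G.adjMatrix ℝ) v w * x w
          + (if v = u then e w * x w else 0) + (if w = u then e v * x w else 0) := by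
        intro w
        rw [hkey v w]
        split_ifs <;> ring
      rw [Finset.sum_congr rfl fun w _ => hterm w]
      rw [Finset.sum_add_distrib, Finset.sum_add_distrib]
      congr 1
      · congr 1
        by_cases hv : v = u
        · simp [hv, hes]
        · simp [hv]
      · rw [Finset.sum_ite_eq' Finset.univ u (fun w => e v * x w)]
        simp
    calc ∑ v, x v * (∑ w, (H.adjMatrix ℝ) v w * x w)
        = ∑ v, (x v * (∑ w, (G.adjMatrix ℝ) v w * x w)
            + (if v = u then x v * (1 - S) else 0) + x v * e v * x u) := by
          refine Finset.sum_congr rfl fun v _ => ?_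
          rw [hrow v]
          by_cases hv : v = u <;> simp [hv] <;> ring
      _ = (∑ v, x v * ∑ w, (G.adjMatrix ℝ) v w * x w) + x u * (1 - S)
            + (∑ v, x v * e v) * x u := by
          rw [Finset.sum_add_distrib, Finset.sum_add_distrib,
            Finset.sum_ite_eq' Finset.univ u (fun v => x v * (1 - S)), Finset.sum_mul]
          simp [mul_comm]
      _ = ∑ v, x v * (∑ w, (G.adjMatrix ℝ) v w * x w) + 2 * x u * (1 - S) := by
          have h3 : ∑ v, x v * e v = 1 - S := by
            rw [← hes]
            exact Finset.sum_congr rfl fun v _ => mul_comm _ _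
          rw [h3]
          ring
  have hHerm : (H.adjMatrix ℝ).IsHermitian := by
    rw [Matrix.IsHermitian, Matrix.conjTranspose_eq_transpose_of_trivial]
    exact H.isSymm_adjMatrix
  have hlamN : ∑ v, x v * ((G.adjMatrix ℝ).mulVec x) v = lam * N := by
    rw [hNdef, Finset.mul_sum]
    refine Finset.sum_congr rfl fun v _ => ?_
    rw [congrFun heig v]
    simp only [Pi.smul_apply, smul_eq_mul]
    ring
  have hray := rayleigh_le_lam1 (H.adjMatrix ℝ) hHerm x hx0
  have h2 : lam * N + 2 * x u * (1 - S) ≤ lam1 (H.adjMatrix ℝ) * N := by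
    rw [← hlamN, ← hQ]
    simpa [hNdef] using hray
  have hpos2 : 0 < 2 * x u * (1 - S) := by
    have := hpos u
    nlinarith
  nlinarith [hN, h2, hpos2]
end
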